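/- Let Γ be a dense subgroup of the unit circle, and let C = (α, β) ∩ Γ be a nonempty proper convex subset (an arc intersected with Γ). Then the preimage of C under any group isomorphism h : ℤ → Γ (with h(n) = exp(2πi·n/r), r > 1 irrational) has the uniform gaps property: there exists M > 0 such that for every x ∈ h⁻¹(C), one of x+1, …, x+M lies in h⁻¹(C). -/

import Mathlib

noncomputable def uexp (x : ℝ) : ℂ := Complex.exp (2 * Real.pi * Complex.I * x)

def Orient (α β γ : ℂ) : Prop :=
  ∃ x y z : ℝ, x < y ∧ y < z ∧ z - x < 1 ∧ α = uexp x ∧ β = uexp y ∧ γ = uexp z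

def arc (α β : ℂ) : Set ℂ := {γ | Orient α γ β}

noncomputable def hmap (r : ℝ) (n : ℤ) : ℂ := uexp ((n : ℝ) / r)

lemma uexp_eq_iff {u v : ℝ} : uexp u = uexp v ↔ ∃ n : ℤ, u = v + n := by
  rw [uexp, uexp, Complex.exp_eq_exp_iff_exists_int]
  constructor
  · rintro ⟨n, h⟩
    refine ⟨n, ?_⟩
    have h2 : (2 * Real.pi * Complex.I) * u = (2 * Real.pi * Complex.I) * (v + n) := by
      rw [h]; push_cast; ring
    have hne : (2 * Real.pi * Complex.I : ℂ) ≠ 0 := by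
      simp [Real.pi_ne_zero, Complex.I_ne_zero]
    have := mul_left_cancel₀ hne h2
    exact_mod_cast this
  · rintro ⟨n, h⟩
    exact ⟨n, by rw [h]; push_cast; ring⟩

lemma uexp_add_int (u : ℝ) (n : ℤ) : uexp (u + n) = uexp u :=
  uexp_eq_iff.2 ⟨n, rfl⟩

lemma mem_arc_iff {a b : ℝ} (hab : a < b) (hab1 : b - a < 1) {t : ℝ} :
    uexp t ∈ arc (uexp a) (uexp b) ↔ ∃ m : ℤ, a + m < t ∧ t < b + m := by
  constructor
  · rintro ⟨x, y, z, hxy, hyz, hzx, hx, hy, hz⟩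
    obtain ⟨p, hp⟩ := uexp_eq_iff.1 hx.symm  -- x = a + p
    obtain ⟨q, hq⟩ := uexp_eq_iff.1 hy.symm  -- y = t + q
    obtain ⟨s, hs⟩ := uexp_eq_iff.1 hz.symm  -- z = b + s
    have hsp : s = p := by
      have h1 : (0:ℝ) < (b - a) + ((s:ℝ) - p) := by
        have := hxy.trans hyz
        rw [hp, hs] at this; linarith
      have h2 : (b - a) + ((s:ℝ) - p) < 1 := by
        rw [hp, hs] at hzx; linarith
      have c1 : ((s - p : ℤ) : ℝ) < 1 := by push_cast; linarith
      have c2 : (-1:ℝ) < ((s - p : ℤ) : ℝ) := by push_cast; linarith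
      have d1 : (s - p : ℤ) < 1 := by exact_mod_cast c1
      have d2 : (-1 : ℤ) < s - p := by exact_mod_cast c2
      omega
    refine ⟨p - q, ?_, ?_⟩
    · have : a + (p:ℝ) < t + q := by rw [← hp, ← hq]; exact hxy
      push_cast; linarith
    · have : t + (q:ℝ) < b + s := by rw [← hq, ← hs]; exact hyz
      rw [hsp] at this
      push_cast; linarith
  · rintro ⟨m, h1, h2⟩
    refine ⟨a + m, t, b + m, h1, h2, by linarith, ?_, ?_, ?_⟩
    · rw [uexp_add_int]
    · rfl
    · rw [uexp_add_int]

lemma step_lemma (a b t s : ℝ) (hs : 0 < s) (h2 : 2*s < b - a) (hab1 : b - a < 1)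
    (ht1 : a < t) (ht2 : t < b) :
    ∃ k : ℤ, 1 ≤ k ∧ k ≤ ⌈1/s⌉ + 1 ∧ a + 1 < t + k*s ∧ t + k*s < b + 1 := by
  set u := a + 1 - t with hu
  have hu0 : 0 < u := by have : b < a + 1 := by linarith
                         simp only [hu]; linarith
  have hu1 : u < 1 := by simp only [hu]; linarith
  refine ⟨⌈u/s⌉ + 1, ?_, ?_, ?_, ?_⟩
  · have : 0 < ⌈u/s⌉ := Int.ceil_pos.2 (div_pos hu0 hs)
    omega
  · have : ⌈u/s⌉ ≤ ⌈1/s⌉ := Int.ceil_le_ceil ((div_le_div_iff_of_pos_right hs).2 hu1.le)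
    omega
  · have h := Int.le_ceil (u/s)
    have : u / s * s = u := div_mul_cancel₀ u hs.ne'
    push_cast
    nlinarith
  · have h := Int.ceil_lt_add_one (u/s)
    have : u / s * s = u := div_mul_cancel₀ u hs.ne'
    push_cast
    nlinarith

lemma exists_step (r : ℝ) (hr : Irrational r) (ε : ℝ) (hε0 : 0 < ε) (hε1 : ε < 1) :
    ∃ (n c : ℤ) (s : ℝ), 1 ≤ n ∧ 0 < s ∧ s < ε ∧
      ((n : ℝ) / r = c + s ∨ (n : ℝ) / r = c - s) := by
  set S : AddSubgroup ℝ := AddSubgroup.closure {1, 1/r} with hS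
  rcases S.dense_or_cyclic with hd | ⟨g, hg⟩
  · obtain ⟨x, hxS, hx⟩ := hd.exists_between hε0
    obtain ⟨m, n, hmn⟩ := AddSubgroup.mem_closure_pair.1 hxS
    simp only [zsmul_eq_mul, mul_one] at hmn
    have hn0 : n ≠ 0 := by
      rintro rfl
      have : (m : ℝ) = x := by rw [← hmn]; ring
      have h1 : (0:ℝ) < m := this ▸ hx.1
      have h2 : (m:ℝ) < 1 := lt_trans (this ▸ hx.2) hε1
      have : (0:ℤ) < m := by exact_mod_cast h1
      have : m < 1 := by exact_mod_cast h2
      omega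
    rcases hn0.lt_or_gt with hneg | hpos
    · refine ⟨-n, m, x, by omega, hx.1, hx.2, Or.inr ?_⟩
      have : (n:ℝ) * (1/r) = x - m := by linarith [hmn]
      push_cast
      have hrne : r ≠ 0 := hr.ne_zero
      field_simp at this ⊢
      linarith
    · refine ⟨n, -m, x, hpos, hx.1, hx.2, Or.inl ?_⟩
      have : (n:ℝ) * (1/r) = x - m := by linarith [hmn]
      push_cast
      field_simp at this ⊢
      linarith
  · exfalso
    have h1 : (1:ℝ) ∈ S := AddSubgroup.subset_closure (by simp)
    have h2 : (1/r:ℝ) ∈ S := AddSubgroup.subset_closure (by simp)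
    rw [hg] at h1 h2
    obtain ⟨m, hm⟩ := AddSubgroup.mem_closure_singleton.1 h1
    obtain ⟨n, hn⟩ := AddSubgroup.mem_closure_singleton.1 h2
    simp only [zsmul_eq_mul] at hm hn
    have hrne : r ≠ 0 := hr.ne_zero
    have hn0 : n ≠ 0 := by
      rintro rfl
      simp only [Int.cast_zero, zero_mul] at hn
      exact one_div_ne_zero hrne hn.symm
    have hg0 : g ≠ 0 := by rintro rfl; simp at hm
    have key : r * (n:ℝ) * g = (m:ℝ) * g := by
      rw [hm]
      have : r * ((n:ℝ) * g) = r * (1/r) := by rw [hn]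
      rw [mul_one_div, div_self hrne] at this
      linarith [this]
    have hrn : r * (n:ℝ) = (m:ℝ) := mul_right_cancel₀ hg0 key
    have : r = (m : ℝ) / n := by
      field_simp
      linarith [hrn]
    exact hr ⟨(m:ℚ)/(n:ℚ), by push_cast; rw [this]⟩

lemma abs_one_eq_uexp {α : ℂ} (hα : ‖α‖ = 1) :
    α = uexp (Complex.arg α / (2 * Real.pi)) := by
  have h := Complex.norm_mul_exp_arg_mul_I α
  rw [hα] at h
  simp only [Complex.ofReal_one, one_mul] at h
  have hpi : (Real.pi : ℂ) ≠ 0 := by exact_mod_cast Real.pi_ne_zero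
  have key : uexp (Complex.arg α / (2 * Real.pi)) = Complex.exp (↑(Complex.arg α) * Complex.I) := by
    rw [uexp]
    congr 1
    push_cast
    field_simp
  rw [key, h]

theorem preimage_convex_uniformGaps (r : ℝ) (hr : Irrational r) (hr1 : 1 < r)
    (α β : ℂ) (hα : ‖α‖ = 1) (hβ : ‖β‖ = 1) (hne : α ≠ β) :
    ∃ M : ℤ, 0 < M ∧ ∀ x : ℤ, hmap r x ∈ arc α β →
      ∃ i : ℤ, 1 ≤ i ∧ i ≤ M ∧ hmap r (x + i) ∈ arc α β := by
  set a := Complex.arg α / (2 * Real.pi) with ha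
  set b₀ := Complex.arg β / (2 * Real.pi) with hb₀
  have hαa : α = uexp a := abs_one_eq_uexp hα
  have hβb₀ : β = uexp b₀ := abs_one_eq_uexp hβ
  set b := a + Int.fract (b₀ - a) with hb
  have hβb : β = uexp b := by
    have : b₀ = b + (⌊b₀ - a⌋ : ℤ) := by
      rw [hb, Int.fract]; ring
    rw [hβb₀, this, uexp_add_int]
  have hab : a < b := by
    rcases (Int.fract_nonneg (b₀ - a)).lt_or_eq with h | h
    · rw [hb]; linarith
    · exfalso
      apply hne
      rw [hαa, hβb, hb, ← h, add_zero]
  have hab1 : b - a < 1 := by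
    rw [hb]; have := Int.fract_lt_one (b₀ - a); linarith
  have hrne : r ≠ 0 := hr.ne_zero
  obtain ⟨n, c, s, hn1, hs0, hsε, hcase⟩ :=
    exists_step r hr ((b - a)/2) (by linarith) (by linarith)
  have h2s : 2 * s < b - a := by linarith
  set K : ℤ := ⌈1/s⌉ + 1 with hK
  have hK1 : 1 ≤ K := by
    have : 0 < ⌈1/s⌉ := Int.ceil_pos.2 (by positivity)
    omega
  refine ⟨K * n, by positivity, ?_⟩
  intro x hx
  rw [hαa, hβb] at hx ⊢
  rw [hmap] at hx
  obtain ⟨m, hm1, hm2⟩ := (mem_arc_iff hab hab1).1 hx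
  rcases hcase with hpos | hneg
  · -- n/r = c + s
    obtain ⟨k, hk1, hk2, hlo, hhi⟩ := step_lemma (a + m) (b + m) ((x:ℝ)/r) s hs0
      (by linarith) (by linarith) hm1 hm2
    refine ⟨k * n, by nlinarith, mul_le_mul_of_nonneg_right hk2 (by omega), ?_⟩
    rw [hmap]
    have heq : ((x + k * n : ℤ) : ℝ) / r = (x:ℝ)/r + (k:ℝ) * s + ((k * c : ℤ) : ℝ) := by
      push_cast
      rw [show s = (n:ℝ)/r - (c:ℝ) by linarith]
      field_simp
      ring
    rw [heq, uexp_add_int]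
    exact (mem_arc_iff hab hab1).2 ⟨m + 1, by push_cast; linarith, by push_cast; linarith⟩
  · -- n/r = c - s
    obtain ⟨k, hk1, hk2, hlo, hhi⟩ := step_lemma (-(b + m)) (-(a + m)) (-((x:ℝ)/r)) s hs0
      (by linarith) (by linarith) (by linarith) (by linarith)
    refine ⟨k * n, by nlinarith, mul_le_mul_of_nonneg_right hk2 (by omega), ?_⟩
    rw [hmap]
    have heq : ((x + k * n : ℤ) : ℝ) / r = ((x:ℝ)/r - (k:ℝ) * s) + ((k * c : ℤ) : ℝ) := by
      push_cast
      rw [show s = (c:ℝ) - (n:ℝ)/r by linarith]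
      field_simp
      ring
    rw [heq, uexp_add_int]
    exact (mem_arc_iff hab hab1).2 ⟨m - 1, by push_cast; linarith, by push_cast; linarith⟩
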